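/- Let $X$ be a real-valued square-integrable random variable with $X \ge 0$. Then $\operatorname{Var}(X) \le (\operatorname{Var}(X^{3/2}))^{2/3}$. -/

import Mathlib

open MeasureTheory ProbabilityTheory
open scoped ENNReal NNReal

lemma rpow_holder_aux {a b : ℝ} (ha : 0 ≤ a) (hb : 0 ≤ b) (hab : b ≤ a) :
    a ^ ((2:ℝ)/3) - b ^ ((2:ℝ)/3) ≤ (a - b) ^ ((2:ℝ)/3) := by
  have h := NNReal.rpow_add_le_add_rpow ((a-b).toNNReal) (b.toNNReal)
    (by norm_num : (0:ℝ) ≤ 2/3) (by norm_num : (2:ℝ)/3 ≤ 1)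
  have hsum : (a-b).toNNReal + b.toNNReal = a.toNNReal := by
    rw [← Real.toNNReal_add (by linarith) hb, sub_add_cancel]
  rw [hsum] at h
  have h' := NNReal.coe_le_coe.2 h
  push_cast [NNReal.coe_rpow, Real.coe_toNNReal _ ha, Real.coe_toNNReal _ hb,
    Real.coe_toNNReal _ (by linarith : (0:ℝ) ≤ a - b)] at h'
  linarith

lemma rpow_holder {a b : ℝ} (ha : 0 ≤ a) (hb : 0 ≤ b) :
    |a ^ ((2:ℝ)/3) - b ^ ((2:ℝ)/3)| ≤ |a - b| ^ ((2:ℝ)/3) := by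
  rcases le_total b a with hab | hab
  · rw [abs_of_nonneg (sub_nonneg.2 (Real.rpow_le_rpow hb hab (by norm_num))),
      abs_of_nonneg (sub_nonneg.2 hab)]
    exact rpow_holder_aux ha hb hab
  · rw [abs_sub_comm, abs_sub_comm a b,
      abs_of_nonneg (sub_nonneg.2 (Real.rpow_le_rpow ha hab (by norm_num))),
      abs_of_nonneg (sub_nonneg.2 hab)]
    exact rpow_holder_aux hb ha hab

/-- for a nonnegative square-integrable random variable `X`,
`Var(X) ≤ (Var(X^{3/2}))^{2/3}` (stated with `evariance` in `ℝ≥0∞` so that an infinite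
right-hand side is handled gracefully). -/
theorem stmt_7 {Ω : Type*} [MeasureSpace Ω] (P : Measure Ω) [IsProbabilityMeasure P]
    (X : Ω → ℝ) (hX : MemLp X 2 P) (hX0 : ∀ ω, 0 ≤ X ω) :
    evariance X P ≤ (evariance (fun ω => X ω ^ ((3 : ℝ) / 2)) P) ^ ((2 : ℝ) / 3) := by
  set Y : Ω → ℝ := fun ω => X ω ^ ((3:ℝ)/2) with hYdef
  set m : ℝ := ∫ ω, Y ω ∂P with hmdef
  have hm0 : 0 ≤ m := integral_nonneg fun ω => Real.rpow_nonneg (hX0 ω) _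
  set c : ℝ := m ^ ((2:ℝ)/3) with hcdef
  have hYm : AEStronglyMeasurable Y P :=
    (Real.continuous_rpow_const (by norm_num : (0:ℝ) ≤ 3/2)).comp_aestronglyMeasurable hX.1
  have hXint : Integrable X P := hX.integrable one_le_two
  have hXc2 : MemLp (fun ω => X ω - c) 2 P := hX.sub (memLp_const c)
  -- translation invariance of variance
  have hvar_eq : evariance X P = evariance (fun ω => X ω - c) P := by
    have hμ : ∫ ω, (X ω - c) ∂P = (∫ ω, X ω ∂P) - c := by
      rw [integral_sub hXint (integrable_const c)]; simp
    simp only [evariance, hμ]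
    congr 1; ext ω; ring_nf
  -- step 1: variance ≤ E[(X-c)^2]
  have h2 : variance (fun ω => X ω - c) P ≤ ∫ ω, (X ω - c)^2 ∂P := by
    have := variance_le_expectation_sq (μ := P) hXc2.1
    simpa using this
  -- step 2: lintegral form
  have h3 : ENNReal.ofReal (∫ ω, (X ω - c)^2 ∂P)
      = ∫⁻ ω, (‖X ω - c‖₊ : ℝ≥0∞)^2 ∂P := by
    rw [ofReal_integral_eq_lintegral_ofReal hXc2.integrable_sq
      (ae_of_all _ fun ω => sq_nonneg _)]
    congr 1; ext ω
    rw [← enorm_eq_nnnorm, Real.enorm_eq_ofReal_abs, ← ENNReal.ofReal_pow (abs_nonneg _), sq_abs]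
  -- pointwise Hölder bound
  have h4 : ∀ ω, (‖X ω - c‖₊ : ℝ≥0∞)^2 ≤ (‖Y ω - m‖₊ : ℝ≥0∞) ^ ((4:ℝ)/3) := by
    intro ω
    have hYω : 0 ≤ Y ω := Real.rpow_nonneg (hX0 ω) _
    have hXeq : (Y ω) ^ ((2:ℝ)/3) = X ω := by
      show (X ω ^ ((3:ℝ)/2)) ^ ((2:ℝ)/3) = X ω
      rw [← Real.rpow_mul (hX0 ω)]
      norm_num
    have habs : |X ω - c| ≤ |Y ω - m| ^ ((2:ℝ)/3) := by
      have := rpow_holder hYω hm0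
      rwa [hXeq] at this
    calc (‖X ω - c‖₊ : ℝ≥0∞)^2
        = (ENNReal.ofReal |X ω - c|)^2 := by rw [← enorm_eq_nnnorm, Real.enorm_eq_ofReal_abs]
      _ ≤ (ENNReal.ofReal (|Y ω - m| ^ ((2:ℝ)/3)))^2 := by
          gcongr
      _ = ((ENNReal.ofReal |Y ω - m|) ^ ((2:ℝ)/3))^2 := by
          rw [ENNReal.ofReal_rpow_of_nonneg (abs_nonneg _) (by norm_num)]
      _ = (ENNReal.ofReal |Y ω - m|) ^ ((4:ℝ)/3) := by
          rw [← ENNReal.rpow_natCast (_ ^ ((2:ℝ)/3)) 2, ← ENNReal.rpow_mul]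
          norm_num
      _ = (‖Y ω - m‖₊ : ℝ≥0∞) ^ ((4:ℝ)/3) := by rw [← enorm_eq_nnnorm, Real.enorm_eq_ofReal_abs]
  -- step 3: Lyapunov
  have h6 : ∫⁻ ω, (‖Y ω - m‖₊ : ℝ≥0∞) ^ ((4:ℝ)/3) ∂P
      ≤ (evariance Y P) ^ ((2:ℝ)/3) := by
    have hf : AEStronglyMeasurable (fun ω => Y ω - m) P :=
      hYm.sub aestronglyMeasurable_const
    have hle := eLpNorm'_le_eLpNorm'_of_exponent_le (f := fun ω => Y ω - m)
      (p := (4:ℝ)/3) (q := 2) (by norm_num) (by norm_num) P hf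
    rw [eLpNorm', eLpNorm'] at hle
    set A := ∫⁻ ω, (‖Y ω - m‖₊ : ℝ≥0∞) ^ ((4:ℝ)/3) ∂P with hA
    set B := ∫⁻ ω, (‖Y ω - m‖₊ : ℝ≥0∞) ^ ((2:ℝ)) ∂P with hB
    have hBvar : B = evariance Y P := by
      rw [evariance, ← hmdef, hB]
      congr 1; ext ω
      rw [← ENNReal.rpow_natCast _ 2]
      norm_num
      rw [enorm_eq_nnnorm]
    have : A = (A ^ ((1:ℝ)/(4/3))) ^ ((4:ℝ)/3) := by
      rw [← ENNReal.rpow_mul]; norm_num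
    calc A = (A ^ ((1:ℝ)/(4/3))) ^ ((4:ℝ)/3) := this
      _ ≤ (B ^ ((1:ℝ)/2)) ^ ((4:ℝ)/3) := by
          gcongr
          simpa only [enorm_eq_nnnorm] using hle
      _ = B ^ ((2:ℝ)/3) := by rw [← ENNReal.rpow_mul]; norm_num
      _ = (evariance Y P) ^ ((2:ℝ)/3) := by rw [hBvar]
  -- combine
  calc evariance X P = ENNReal.ofReal (variance (fun ω => X ω - c) P) := by
        rw [hvar_eq, hXc2.ofReal_variance_eq]
    _ ≤ ENNReal.ofReal (∫ ω, (X ω - c)^2 ∂P) := ENNReal.ofReal_le_ofReal h2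
    _ = ∫⁻ ω, (‖X ω - c‖₊ : ℝ≥0∞)^2 ∂P := h3
    _ ≤ ∫⁻ ω, (‖Y ω - m‖₊ : ℝ≥0∞) ^ ((4:ℝ)/3) ∂P := lintegral_mono fun ω => h4 ω
    _ ≤ (evariance Y P) ^ ((2:ℝ)/3) := h6
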